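/- Let (x1,...,x6) with x2, x4, x6 > 0 satisfy the system (E): x1 = 2·x2·x4 − (1/2)·(x2/x4 + x4/x2), x3 = 2·x4·x6 − (1/2)·(x4/x6 + x6/x4), x5 = 2·x2·x6 − (1/2)·(x2/x6 + x6/x2), and suppose 1 ≤ x3 ≤ 2, 1 ≤ x5 ≤ 2 and x1 = 2 (so that the hyper-ideal edge e23 has the maximal length arccosh 2). Then φ(x) ≤ 7√2/12, and moreover arccos(7√2/12) > 2π/11; consequently the dihedral angle arccos(φ(x)) at e23 is greater than 2π/11. -/

import Mathlib

/-- The cosine of the dihedral angle at the hyper-ideal edge e23 of a decorated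
3-1 type hyperbolic tetrahedron. -/
noncomputable def phi (x1 x2 x3 x4 x5 x6 : ℝ) : ℝ :=
  (x3 * x4 + x2 * x5 + x1 * x2 * x3 + x1 * x4 * x5 + x6 - x1 ^ 2 * x6) /
    (Real.sqrt (x1 ^ 2 + x3 ^ 2 + x5 ^ 2 + 2 * x1 * x3 * x5 - 1) *
      Real.sqrt (x2 ^ 2 + x4 ^ 2 + 2 * x1 * x2 * x4))

set_option maxHeartbeats 1000000 in
private lemma stmt13_key (x2 x3 x4 x5 x6 : ℝ)
    (h2 : 0 < x2) (h4 : 0 < x4) (h6 : 0 < x6)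
    (c1 : x2^2 + x4^2 + 4*(x2*x4) = 4*(x2*x4)^2)
    (c3 : x4^2 + x6^2 + 2*x3*(x4*x6) = 4*(x4*x6)^2)
    (c5 : x2^2 + x6^2 + 2*x5*(x2*x6) = 4*(x2*x6)^2)
    (h31 : 1 ≤ x3) (h32 : x3 ≤ 2) (h51 : 1 ≤ x5) (h52 : x5 ≤ 2) :
    x3*x4 + x2*x5 + 2*(x2*x3) + 2*(x4*x5) - 3*x6 ≤ (8/5)*(x3+x5+1)*(x2*x4) := by
  have hw1 : 3/2 ≤ x2*x4 := by nlinarith [sq_nonneg (x2-x4), mul_pos h2 h4]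
  have hv : 1 + x3 ≤ 2*(x4*x6) := by nlinarith [sq_nonneg (x4-x6), mul_pos h4 h6]
  have hu : 1 + x5 ≤ 2*(x2*x6) := by nlinarith [sq_nonneg (x2-x6), mul_pos h2 h6]
  have hid : 2*(x2*x4*x6)*(x4*x5 - x2*x3) = x6^2*(x2^2-x4^2) := by
    linear_combination x4^2*c5 - x2^2*c3
  have hr : 2*x2^2 + 2*x4^2 ≤ 5*(x2*x4) := by
    rcases le_total x2 x4 with h | h
    · have h1' : x4*x5 ≤ x2*x3 := by
        nlinarith [mul_pos (mul_pos h2 h4) h6, mul_nonneg (sq_nonneg x6) (by nlinarith : (0:ℝ) ≤ x4^2 - x2^2)]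
      have hx : x4 ≤ 2*x2 := by nlinarith
      nlinarith
    · have h1' : x2*x3 ≤ x4*x5 := by
        nlinarith [mul_pos (mul_pos h2 h4) h6, mul_nonneg (sq_nonneg x6) (by nlinarith : (0:ℝ) ≤ x2^2 - x4^2)]
      have hx : x2 ≤ 2*x4 := by nlinarith
      nlinarith
  have hw2 : x2*x4 ≤ 13/8 := by nlinarith [mul_pos h2 h4]
  have hs2 : (x2+x4)^2 = 4*(x2*x4)^2 - 2*(x2*x4) := by linear_combination c1
  have hspos : 0 < x2+x4 := by linarith
  have hA2 : (16/5)*(x2*x4)*(x2+x4) + 3 ≤ 2*(x2+x4)*(x4+2*x2) := by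
    nlinarith [sq_nonneg (2*x2-x4), hs2, hw1, hw2, hspos, mul_pos h2 h4,
      mul_nonneg (mul_nonneg (by linarith : (0:ℝ) ≤ x2*x4 - 3/2) (by linarith : (0:ℝ) ≤ 13/8 - x2*x4)) hspos.le]
  have hA4 : (16/5)*(x2*x4)*(x2+x4) + 3 ≤ 2*(x2+x4)*(x2+2*x4) := by
    nlinarith [sq_nonneg (2*x4-x2), hs2, hw1, hw2, hspos, mul_pos h2 h4,
      mul_nonneg (mul_nonneg (by linarith : (0:ℝ) ≤ x2*x4 - 3/2) (by linarith : (0:ℝ) ≤ 13/8 - x2*x4)) hspos.le]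
  have hF : 12*(x2+x4)^2 ≤ 18 + 16*(x2*x4)*(x2+x4) := by
    nlinarith [hs2, hspos, hw1, hw2,
      mul_nonneg (mul_nonneg (by linarith : (0:ℝ) ≤ x2*x4 - 3/2) (by linarith : (0:ℝ) ≤ 13/8 - x2*x4)) hspos.le,
      sq_nonneg (x2+x4 - 5/2)]
  have hH : 2 + x3 + x5 ≤ 2*x6*(x2+x4) := by nlinarith
  have key' : 2*(x2+x4)*(x3*(x4+2*x2) + x5*(x2+2*x4) - 3*x6) ≤ 2*(x2+x4)*((8/5)*(x3+x5+1)*(x2*x4)) := by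
    nlinarith [mul_nonneg (by linarith : (0:ℝ) ≤ 2-x3) (by linarith : (0:ℝ) ≤ 2*(x2+x4)*(x4+2*x2) - 3 - (16/5)*(x2*x4)*(x2+x4)),
      mul_nonneg (by linarith : (0:ℝ) ≤ 2-x5) (by linarith : (0:ℝ) ≤ 2*(x2+x4)*(x2+2*x4) - 3 - (16/5)*(x2*x4)*(x2+x4)),
      hH, hF]
  have hfin := (mul_le_mul_iff_right₀ (by linarith : (0:ℝ) < 2*(x2+x4))).mp key'
  linarith [hfin]

set_option maxHeartbeats 2000000 in
private lemma stmt13_rest (x2 x3 x4 x5 x6 : ℝ) (phiv : ℝ)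
    (h2 : 0 < x2) (h4 : 0 < x4) (h6 : 0 < x6)
    (h31 : 1 ≤ x3) (h32 : x3 ≤ 2) (h51 : 1 ≤ x5) (h52 : x5 ≤ 2)
    (c1 : x2^2 + x4^2 + 4*(x2*x4) = 4*(x2*x4)^2)
    (key : x3*x4 + x2*x5 + 2*(x2*x3) + 2*(x4*x5) - 3*x6 ≤ (8/5)*(x3+x5+1)*(x2*x4))
    (hphiv : phiv = (x3 * x4 + x2 * x5 + 2 * x2 * x3 + 2 * x4 * x5 + x6 - 2 ^ 2 * x6) /
    (Real.sqrt (2 ^ 2 + x3 ^ 2 + x5 ^ 2 + 2 * 2 * x3 * x5 - 1) *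
      Real.sqrt (x2 ^ 2 + x4 ^ 2 + 2 * 2 * x2 * x4))) :
    phiv ≤ 7 * Real.sqrt 2 / 12 ∧
    Real.arccos (7 * Real.sqrt 2 / 12) > 2 * Real.pi / 11 ∧
    Real.arccos phiv > 2 * Real.pi / 11 := by
  have hs2a : Real.sqrt 2 < 1.41422 := by
    nlinarith [Real.sq_sqrt (by norm_num : (0:ℝ) ≤ 2), Real.sqrt_nonneg 2]
  have hs2b : 1.41421 < Real.sqrt 2 := by
    nlinarith [Real.sq_sqrt (by norm_num : (0:ℝ) ≤ 2), Real.sqrt_nonneg 2]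
  have hsqrtB : Real.sqrt (x2 ^ 2 + x4 ^ 2 + 2 * 2 * x2 * x4) = 2*(x2*x4) := by
    rw [show x2 ^ 2 + x4 ^ 2 + 2 * 2 * x2 * x4 = (2*(x2*x4))^2 by linear_combination c1]
    exact Real.sqrt_sq (by positivity)
  have hA : (x3+x5+1) ≤ Real.sqrt (2 ^ 2 + x3 ^ 2 + x5 ^ 2 + 2 * 2 * x3 * x5 - 1) := by
    rw [show (x3+x5+1) = Real.sqrt ((x3+x5+1)^2) from (Real.sqrt_sq (by linarith)).symm]
    apply Real.sqrt_le_sqrt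
    nlinarith [mul_nonneg (sub_nonneg.2 h31) (sub_nonneg.2 h51)]
  have hphi45 : phiv ≤ 4/5 := by
    rw [hphiv, div_le_iff₀ (by nlinarith [Real.sqrt_nonneg (2 ^ 2 + x3 ^ 2 + x5 ^ 2 + 2 * 2 * x3 * x5 - 1), mul_pos h2 h4] : 0 < Real.sqrt (2 ^ 2 + x3 ^ 2 + x5 ^ 2 + 2 * 2 * x3 * x5 - 1) * Real.sqrt (x2 ^ 2 + x4 ^ 2 + 2 * 2 * x2 * x4))]
    rw [hsqrtB]
    have h1 : x3 * x4 + x2 * x5 + 2 * x2 * x3 + 2 * x4 * x5 + x6 - 2 ^ 2 * x6 ≤ (4/5) * ((x3+x5+1) * (2*(x2*x4))) := by nlinarith [key]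
    have h2' : (4/5) * ((x3+x5+1) * (2*(x2*x4))) ≤ (4/5) * (Real.sqrt (2 ^ 2 + x3 ^ 2 + x5 ^ 2 + 2 * 2 * x3 * x5 - 1) * (2*(x2*x4))) :=
      mul_le_mul_of_nonneg_left (mul_le_mul_of_nonneg_right hA (by positivity : (0:ℝ) ≤ 2*(x2*x4))) (by norm_num)
    linarith
  have hpart1 : phiv ≤ 7 * Real.sqrt 2 / 12 := by nlinarith [hs2b]
  have hcos : 7 * Real.sqrt 2 / 12 < Real.cos (2 * Real.pi / 11) := by
    have hb := Real.one_sub_sq_div_two_le_cos (x := 2 * Real.pi / 11)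
    have hpi2 : Real.pi^2 < 3969/400 := by nlinarith [Real.pi_lt_d2, Real.pi_gt_three]
    have heq : (2 * Real.pi / 11)^2/2 = 2/121*Real.pi^2 := by ring
    have hq : (2 * Real.pi / 11)^2/2 < 33/200 := by rw [heq]; linarith
    have hs : 7 * Real.sqrt 2 / 12 < 0.825 := by linarith
    linarith [hb, hq, hs]
  have hpart2 : Real.arccos (7 * Real.sqrt 2 / 12) > 2 * Real.pi / 11 := by
    have h0 : (0:ℝ) ≤ 2 * Real.pi / 11 := by positivity
    have hπ : 2 * Real.pi / 11 ≤ Real.pi := by nlinarith [Real.pi_pos]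
    have hmem1 : 7 * Real.sqrt 2 / 12 ∈ Set.Icc (-1:ℝ) 1 := by
      constructor <;> nlinarith [Real.sqrt_nonneg 2, hs2a]
    have hmem2 : Real.cos (2 * Real.pi / 11) ∈ Set.Icc (-1:ℝ) 1 :=
      ⟨Real.neg_one_le_cos _, Real.cos_le_one _⟩
    have := Real.strictAntiOn_arccos hmem1 hmem2 hcos
    rwa [Real.arccos_cos h0 hπ] at this
  refine ⟨hpart1, hpart2, ?_⟩
  have hmono : Real.arccos (7 * Real.sqrt 2 / 12) ≤ Real.arccos phiv := by
    have := Real.monotone_arcsin hpart1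
    rw [Real.arccos_eq_pi_div_two_sub_arcsin, Real.arccos_eq_pi_div_two_sub_arcsin]
    linarith
  linarith

/-- if x satisfies the system (E), 1 ≤ x3, x5 ≤ 2 and x1 = 2
(the hyper-ideal edge e23 has maximal length arccosh 2), then
φ(x) ≤ 7√2/12, arccos(7√2/12) > 2π/11 and the dihedral angle
arccos(φ(x)) is greater than 2π/11. -/
theorem stmt_13 (x1 x2 x3 x4 x5 x6 : ℝ)
    (h2 : 0 < x2) (h4 : 0 < x4) (h6 : 0 < x6)
    (e1 : x1 = 2 * x2 * x4 - (1/2) * (x2 / x4 + x4 / x2))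
    (e3 : x3 = 2 * x4 * x6 - (1/2) * (x4 / x6 + x6 / x4))
    (e5 : x5 = 2 * x2 * x6 - (1/2) * (x2 / x6 + x6 / x2))
    (h3 : 1 ≤ x3 ∧ x3 ≤ 2) (h5 : 1 ≤ x5 ∧ x5 ≤ 2) (h1 : x1 = 2) :
    phi x1 x2 x3 x4 x5 x6 ≤ 7 * Real.sqrt 2 / 12 ∧
    Real.arccos (7 * Real.sqrt 2 / 12) > 2 * Real.pi / 11 ∧
    Real.arccos (phi x1 x2 x3 x4 x5 x6) > 2 * Real.pi / 11 := by
  obtain ⟨h31, h32⟩ := h3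
  obtain ⟨h51, h52⟩ := h5
  subst h1
  have c1 : x2^2 + x4^2 + 4*(x2*x4) = 4*(x2*x4)^2 := by
    have h := e1
    field_simp at h
    nlinarith [h, mul_pos h2 h4]
  have c3 : x4^2 + x6^2 + 2*x3*(x4*x6) = 4*(x4*x6)^2 := by
    have h := e3
    field_simp at h
    nlinarith [h, mul_pos h4 h6]
  have c5 : x2^2 + x6^2 + 2*x5*(x2*x6) = 4*(x2*x6)^2 := by
    have h := e5
    field_simp at h
    nlinarith [h, mul_pos h2 h6]
  have key := stmt13_key x2 x3 x4 x5 x6 h2 h4 h6 c1 c3 c5 h31 h32 h51 h52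
  exact stmt13_rest x2 x3 x4 x5 x6 (phi 2 x2 x3 x4 x5 x6) h2 h4 h6 h31 h32 h51 h52 c1 key rfl
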